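/- Let G be a finite simple connected graph with Laplacian L, let ω > 0, and let E_ω(L) be the span of eigenvectors of L with eigenvalues ≤ ω. Then f ∈ E_ω(L) if and only if ‖L^s f‖ ≤ ω^s ‖f‖ for all real (equivalently all natural) s ≥ 0. -/

import Mathlib

open Matrix
open scoped InnerProductSpace

/-- The ℓ²-norm of a function on the vertices of a finite graph. -/
noncomputable def gnorm {V : Type*} [Fintype V] (f : V → ℝ) : ℝ :=
  Real.sqrt (∑ v, f v ^ 2)

/-- `E_ω(L)`: the span of eigenvectors of the combinatorial Laplacian `L`
whose eigenvalues are at most `ω`. -/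
noncomputable def Eomega {V : Type*} [Fintype V] [DecidableEq V]
    (G : SimpleGraph V) [DecidableRel G.Adj] (ω : ℝ) : Submodule ℝ (V → ℝ) :=
  Submodule.span ℝ
    {f : V → ℝ | f ≠ 0 ∧ ∃ μ : ℝ, μ ≤ ω ∧ (G.lapMatrix ℝ).mulVec f = μ • f}

lemma inner_mulVec_symm {V : Type*} [Fintype V] (A : Matrix V V ℝ) (hA : A.IsHermitian)
    (u x : EuclideanSpace ℝ V) :
    ⟪u, (WithLp.toLp 2 <| A.mulVec x)⟫_ℝ
      = ⟪(WithLp.toLp 2 <| A.mulVec u), x⟫_ℝ := by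
  simp only [PiLp.inner_apply, RCLike.inner_apply, starRingEnd_apply, star_trivial,
    Matrix.mulVec, dotProduct]
  simp_rw [Finset.mul_sum, Finset.sum_mul]
  rw [Finset.sum_comm]
  refine Finset.sum_congr rfl fun j _ => Finset.sum_congr rfl fun i _ => ?_
  have : A j i = A i j := by simpa using hA.apply i j
  rw [this]; ring

/-- `f ∈ E_ω(L)` iff the Bernstein inequality `‖L^s f‖ ≤ ω^s ‖f‖` holds for all natural `s`. -/
theorem stmt_2 {V : Type*} [Fintype V] [DecidableEq V]
    (G : SimpleGraph V) [DecidableRel G.Adj] (hG : G.Connected)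
    (ω : ℝ) (hω : 0 < ω) (f : V → ℝ) :
    f ∈ Eomega G ω ↔
      ∀ s : ℕ, gnorm (((G.lapMatrix ℝ) ^ s).mulVec f) ≤ ω ^ s * gnorm f := by
  classical
  set L : Matrix V V ℝ := G.lapMatrix ℝ with hLdef
  have hPSD : L.PosSemidef := G.posSemidef_lapMatrix ℝ
  have hL : L.IsHermitian := hPSD.1
  set b := hL.eigenvectorBasis with hbdef
  set μ := hL.eigenvalues with hμdef
  have hμ0 : ∀ j, 0 ≤ μ j := hPSD.eigenvalues_nonneg
  -- coefficients
  set c : (V → ℝ) → V → ℝ := fun g j => b.repr (WithLp.toLp 2 <| g) j with hcdef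
  -- step lemma: one application of L multiplies coefficient j by μ j
  have step : ∀ (g : V → ℝ) (j : V), c (L.mulVec g) j = μ j * c g j := by
    intro g j
    have h1 : c (L.mulVec g) j
        = ⟪(b j), (WithLp.toLp 2 <| L.mulVec g)⟫_ℝ :=
      b.repr_apply_apply _ j
    rw [h1, inner_mulVec_symm L hL (b j) (WithLp.toLp 2 <| g)]
    have h2 : (WithLp.toLp 2 <| L.mulVec (b j))
        = μ j • (b j) := by
          rw [hL.mulVec_eigenvectorBasis j]; rfl
    rw [h2, real_inner_smul_left]
    rw [hcdef]
    simp [b.repr_apply_apply]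
  have key : ∀ (s : ℕ) (g : V → ℝ) (j : V), c ((L ^ s).mulVec g) j = μ j ^ s * c g j := by
    intro s
    induction s with
    | zero => intro g j; simp [Matrix.one_mulVec]
    | succ n ih =>
      intro g j
      have e : (L ^ (n + 1)).mulVec g = L.mulVec ((L ^ n).mulVec g) := by
        rw [pow_succ', Matrix.mulVec_mulVec]
      rw [e, step, ih]
      ring
  -- Parseval
  have parseval : ∀ g : V → ℝ, ∑ v, g v ^ 2 = ∑ j, c g j ^ 2 := by
    intro g
    have h1 : ‖(WithLp.toLp 2 <| g)‖ ^ 2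
        = ∑ v, g v ^ 2 := by
      rw [EuclideanSpace.norm_eq, Real.sq_sqrt (by positivity)]
      exact Finset.sum_congr rfl fun v _ => by rw [Real.norm_eq_abs, sq_abs]
    have h2 : ‖(WithLp.toLp 2 <| g)‖
        = ‖b.repr (WithLp.toLp 2 <| g)‖ := (b.repr.norm_map _).symm
    rw [← h1, h2, EuclideanSpace.norm_eq, Real.sq_sqrt (by positivity)]
    exact Finset.sum_congr rfl fun j _ => by rw [Real.norm_eq_abs, sq_abs]
  have gnorm_nonneg : ∀ g : V → ℝ, 0 ≤ gnorm g := fun g => Real.sqrt_nonneg _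
  -- main equivalence with coefficient characterization
  have main : f ∈ Eomega G ω ↔ ∀ j, ω < μ j → c f j = 0 := by
    constructor
    · intro hf j hj
      let φ : (V → ℝ) →ₗ[ℝ] ℝ :=
        { toFun := fun g => c g j
          map_add' := fun x y => by
            show b.repr ((WithLp.toLp 2 x) + WithLp.toLp 2 y) j = _
            rw [map_add]; rfl
          map_smul' := fun m x => by
            show b.repr (m • (WithLp.toLp 2 x)) j = _
            rw [_root_.map_smul]; rfl }
      have hsub : {g : V → ℝ | g ≠ 0 ∧ ∃ μ' : ℝ, μ' ≤ ω ∧ L.mulVec g = μ' • g}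
          ⊆ (LinearMap.ker φ : Set (V → ℝ)) := by
        rintro g ⟨-, μ', hμ', hg⟩
        have h1 : c (L.mulVec g) j = μ' * c g j := by
          rw [hg]
          show b.repr (μ' • (WithLp.toLp 2 g)) j = _
          rw [_root_.map_smul]; rfl
        rw [step g j] at h1
        have hne : μ j ≠ μ' := by linarith
        have : (μ j - μ') * c g j = 0 := by linarith
        have hcg : c g j = 0 := by
          rcases mul_eq_zero.1 this with h | h
          · exact absurd (by linarith : μ j = μ') hne
          · exact h
        exact hcg
      exact (Submodule.span_le.2 hsub) hf
    · intro hc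
      have hf : f = ∑ j, c f j • (fun v => b j v) := by
        have := b.sum_repr (WithLp.toLp 2 <| f)
        have h2 : (WithLp.toLp 2 <| f) = ∑ j, c f j • b j := this.symm
        simpa using congrArg (fun x : EuclideanSpace ℝ V => (x : V → ℝ)) h2
      rw [hf]
      refine Submodule.sum_mem _ fun j _ => ?_
      by_cases hj : ω < μ j
      · rw [hc j hj, zero_smul]; exact Submodule.zero_mem _
      · refine Submodule.smul_mem _ _ (Submodule.subset_span ?_)
        refine ⟨?_, μ j, le_of_not_gt hj, ?_⟩
        · intro h0
          have : (b j : EuclideanSpace ℝ V) = 0 := by ext v; simpa using congrFun h0 v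
          exact b.toBasis.ne_zero j (by simpa using this)
        · exact hL.mulVec_eigenvectorBasis j
  rw [main]
  constructor
  · -- coefficients vanish above ω ⟹ Bernstein
    intro hc s
    have hsum : ∑ v, ((L ^ s).mulVec f) v ^ 2 ≤ (ω ^ s) ^ 2 * ∑ v, f v ^ 2 := by
      rw [parseval ((L ^ s).mulVec f), parseval f, Finset.mul_sum]
      refine Finset.sum_le_sum fun j _ => ?_
      rw [key s f j, mul_pow]
      by_cases hj : ω < μ j
      · rw [hc j hj]; simp
      · push_neg at hj
        have : (μ j ^ s) ^ 2 ≤ (ω ^ s) ^ 2 := by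
          have h1 : μ j ^ s ≤ ω ^ s := pow_le_pow_left₀ (hμ0 j) hj s
          have h2 : 0 ≤ μ j ^ s := pow_nonneg (hμ0 j) s
          nlinarith
        nlinarith [sq_nonneg (c f j)]
    calc gnorm ((L ^ s).mulVec f) = Real.sqrt (∑ v, ((L ^ s).mulVec f) v ^ 2) := rfl
      _ ≤ Real.sqrt ((ω ^ s) ^ 2 * ∑ v, f v ^ 2) := Real.sqrt_le_sqrt hsum
      _ = ω ^ s * gnorm f := by
          rw [Real.sqrt_mul (sq_nonneg _), Real.sqrt_sq (by positivity)]; rfl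
  · -- Bernstein ⟹ coefficients vanish above ω
    intro h j hj
    by_contra hcj
    -- |c f j| > 0
    have habs : 0 < |c f j| := abs_pos.2 hcj
    have hbound : ∀ s : ℕ, μ j ^ s * |c f j| ≤ ω ^ s * gnorm f := by
      intro s
      have h1 : (μ j ^ s * c f j) ^ 2 ≤ ∑ i, c ((L ^ s).mulVec f) i ^ 2 := by
        have := Finset.single_le_sum (f := fun i => c ((L ^ s).mulVec f) i ^ 2)
          (fun i _ => sq_nonneg _) (Finset.mem_univ j)
        simpa only [key s f j] using this
      have h2 : (gnorm ((L ^ s).mulVec f)) ^ 2 = ∑ i, c ((L ^ s).mulVec f) i ^ 2 := by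
        rw [gnorm, Real.sq_sqrt (by positivity), parseval]
      have h3 : (gnorm ((L ^ s).mulVec f)) ^ 2 ≤ (ω ^ s * gnorm f) ^ 2 := by
        have := h s
        nlinarith [gnorm_nonneg ((L ^ s).mulVec f)]
      have h4 : (μ j ^ s * |c f j|) ^ 2 ≤ (ω ^ s * gnorm f) ^ 2 := by
        calc (μ j ^ s * |c f j|) ^ 2 = (μ j ^ s * c f j) ^ 2 := by
              rw [mul_pow, mul_pow, sq_abs]
          _ ≤ (ω ^ s * gnorm f) ^ 2 := by rw [← h2] at h1; linarith [h1, h3]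
      have h5 : 0 ≤ μ j ^ s * |c f j| :=
        mul_nonneg (pow_nonneg (hμ0 j) s) (abs_nonneg _)
      have h6 : 0 ≤ ω ^ s * gnorm f :=
        mul_nonneg (pow_nonneg hω.le s) (gnorm_nonneg f)
      nlinarith
    -- derive contradiction: (μ j / ω)^s unbounded
    have hr : 1 < μ j / ω := (one_lt_div hω).2 hj
    obtain ⟨s, hs⟩ := pow_unbounded_of_one_lt (gnorm f / |c f j|) hr
    have := hbound s
    have hμs : μ j ^ s = (μ j / ω) ^ s * ω ^ s := by
      rw [div_pow, div_mul_cancel₀]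
      positivity
    rw [hμs] at this
    have hgf : gnorm f / |c f j| < (μ j / ω) ^ s := hs
    have : (μ j / ω) ^ s * ω ^ s * |c f j| ≤ ω ^ s * gnorm f := this
    have hωs : 0 < ω ^ s := by positivity
    have hlt : gnorm f < (μ j / ω) ^ s * |c f j| := (div_lt_iff₀ habs).1 hgf
    nlinarith [mul_lt_mul_of_pos_left hlt hωs, this]
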